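/- Given probability density functions p, q on ℝ with p(x) > 0 for almost every x and χ := ∫ q(x)²/p(x) dx < ∞, an integer d ≥ 1, and group sizes m₁,…,m_d ∈ ℕ with N = m₁+…+m_d, define probability measures on ℝ^N (coordinates indexed by pairs (j,k), j ∈ {1,…,d}, k ∈ {1,…,m_j}): Q has density ∏_{j=1}^d ∏_{k=1}^{m_j} p(b_j^{(k)}), and P has density (1/d) ∑_{j=1}^d [∏_{k=1}^{m_j} q(b_j^{(k)})] · ∏_{j'≠j} ∏_{k=1}^{m_{j'}} p(b_{j'}^{(k)}). Then TV(P, Q) ≤ (1/(2√d)) · [ (1/d) ∑_{j=1}^d χ^{m_j} − 1 ]^{1/2}. Consequently, for any hypothesis test Ψ distinguishing Q from P, the sum of the two error probabilities is at least 1 − (1/(2√d)) · [ (1/d) ∑_{j=1}^d χ^{m_j} − 1 ]^{1/2}. -/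

import Mathlib

open MeasureTheory

/-- Total variation distance between two measures:
`TV(P, Q) = sup over measurable sets s of |P s - Q s|`. -/
noncomputable def tvDist {Ω : Type*} [MeasurableSpace Ω] (P Q : Measure Ω) : ℝ :=
  ⨆ s : {s : Set Ω // MeasurableSet s}, |(P s.1).toReal - (Q s.1).toReal|

lemma half_L1_bound {Ω : Type*} [MeasurableSpace Ω] (μ : Measure Ω) {f g : Ω → ℝ}
    (hf : Integrable f μ) (hg : Integrable g μ) (hfg : ∫ x, f x ∂μ = ∫ x, g x ∂μ)
    {s : Set Ω} (hs : MeasurableSet s) :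
    |(∫ x in s, f x ∂μ) - ∫ x in s, g x ∂μ| ≤ (1/2) * ∫ x, |f x - g x| ∂μ := by
  have hint : Integrable (fun x => f x - g x) μ := hf.sub hg
  have h0 : (∫ x in s, (f x - g x) ∂μ) + ∫ x in sᶜ, (f x - g x) ∂μ = 0 := by
    rw [integral_add_compl hs hint, integral_sub hf hg, hfg, sub_self]
  have h1 : (∫ x in s, |f x - g x| ∂μ) + ∫ x in sᶜ, |f x - g x| ∂μ = ∫ x, |f x - g x| ∂μ :=
    integral_add_compl hs hint.abs
  have h2 : |∫ x in s, (f x - g x) ∂μ| ≤ ∫ x in s, |f x - g x| ∂μ := by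
    simpa using norm_integral_le_integral_norm (μ := μ.restrict s) (fun x => f x - g x)
  have h3 : |∫ x in sᶜ, (f x - g x) ∂μ| ≤ ∫ x in sᶜ, |f x - g x| ∂μ := by
    simpa using norm_integral_le_integral_norm (μ := μ.restrict sᶜ) (fun x => f x - g x)
  have h4 : (∫ x in s, f x ∂μ) - ∫ x in s, g x ∂μ = ∫ x in s, (f x - g x) ∂μ :=
    (integral_sub hf.integrableOn hg.integrableOn).symm
  rw [h4]
  have h5 : |∫ x in s, (f x - g x) ∂μ| = |∫ x in sᶜ, (f x - g x) ∂μ| := by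
    rw [show (∫ x in sᶜ, (f x - g x) ∂μ) = - ∫ x in s, (f x - g x) ∂μ by linarith, abs_neg]
  linarith [abs_nonneg (∫ x in s, (f x - g x) ∂μ)]

/-- Let `p, q` be densities on `ℝ` with `p > 0` a.e. and `χ = ∫ q²/p < ∞`. On `ℝ^N`
(coordinates indexed by `(j,k)`, `j < d`, `k < m j`), let `Q` be the product measure with
all coordinates having density `p`, and `P` the uniform mixture over `j` of products where
group `j` has density `q` and the others density `p`. Then
`TV(P, Q) ≤ (1/(2√d)) · ((1/d) ∑_j χ^{m_j} - 1)^{1/2}`, and consequently any hypothesis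
test `Ψ` distinguishing the two has total error probability at least
`1 - (1/(2√d)) · ((1/d) ∑_j χ^{m_j} - 1)^{1/2}`. -/
theorem tv_bound_mixture_general
    (p q : ℝ → ℝ) (hpm : Measurable p) (hqm : Measurable q)
    (hp0 : 0 ≤ p) (hq0 : 0 ≤ q)
    (hp1 : ∫ x, p x = 1) (hq1 : ∫ x, q x = 1)
    (hppos : ∀ᵐ x ∂(volume : Measure ℝ), 0 < p x)
    (χ : ℝ) (hχint : Integrable (fun x => (q x) ^ 2 / p x))
    (hχ : χ = ∫ x, (q x) ^ 2 / p x)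
    (d : ℕ) (hd : 1 ≤ d) (m : Fin d → ℕ)
    (P Q : Measure (((j : Fin d) × Fin (m j)) → ℝ))
    (hQ : Q = volume.withDensity fun b => ENNReal.ofReal (∏ i, p (b i)))
    (hP : P = volume.withDensity fun b => ENNReal.ofReal
      ((1 / d : ℝ) * ∑ j : Fin d,
        (∏ k : Fin (m j), q (b ⟨j, k⟩)) *
          ∏ j' ∈ Finset.univ.erase j, ∏ k : Fin (m j'), p (b ⟨j', k⟩))) :
    tvDist P Q ≤
        (1 / (2 * Real.sqrt d)) * Real.sqrt ((1 / d : ℝ) * ∑ j, χ ^ (m j) - 1) ∧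
      ∀ Ψ : (((j : Fin d) × Fin (m j)) → ℝ) → Bool, Measurable Ψ →
        (P {b | Ψ b = true}).toReal + (Q {b | Ψ b = false}).toReal ≥
          1 - (1 / (2 * Real.sqrt d)) * Real.sqrt ((1 / d : ℝ) * ∑ j, χ ^ (m j) - 1) := by
  classical
  have hd0 : (0:ℝ) < d := by exact_mod_cast Nat.pos_of_ne_zero (by omega)
  -- basic integrability
  have hpInt : Integrable p := by
    by_contra hc; rw [integral_undef hc] at hp1; norm_num at hp1
  have hqInt : Integrable q := by
    by_contra hc; rw [integral_undef hc] at hq1; norm_num at hq1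
  set r : Fin d → ((j : Fin d) × Fin (m j)) → ℝ → ℝ :=
    fun j i => if i.1 = j then q else p with hr_def
  have hrm : ∀ j i, Measurable (r j i) := by
    intro j i; by_cases h : i.1 = j <;> simp [hr_def, h, hqm, hpm]
  have hr0 : ∀ j i x, 0 ≤ r j i x := by
    intro j i x
    by_cases h : i.1 = j
    · simpa [hr_def, h] using hq0 x
    · simpa [hr_def, h] using hp0 x
  have hrInt : ∀ j i, Integrable (r j i) := by
    intro j i; by_cases h : i.1 = j <;> simp [hr_def, h, hqInt, hpInt]
  have hrint1 : ∀ j i, ∫ x, r j i x = 1 := by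
    intro j i; by_cases h : i.1 = j <;> simp [hr_def, h, hq1, hp1]
  set g : (((j : Fin d) × Fin (m j)) → ℝ) → ℝ := fun b => ∏ i, p (b i) with hg_def
  set gj : Fin d → (((j : Fin d) × Fin (m j)) → ℝ) → ℝ :=
    fun j b => ∏ i, r j i (b i) with hgj_def
  set f : (((j : Fin d) × Fin (m j)) → ℝ) → ℝ :=
    fun b => (1 / d : ℝ) * ∑ j, gj j b with hf_def
  have prod_split : ∀ (F : ((j : Fin d) × Fin (m j)) → ℝ),
      ∏ i, F i = ∏ j' : Fin d, ∏ k : Fin (m j'), F ⟨j', k⟩ := by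
    intro F; rw [← Finset.univ_sigma_univ, Finset.prod_sigma]
  have hgj_eq : ∀ j b,
      (∏ k : Fin (m j), q (b ⟨j, k⟩)) *
        ∏ j' ∈ Finset.univ.erase j, ∏ k : Fin (m j'), p (b ⟨j', k⟩) = gj j b := by
    intro j b
    rw [hgj_def]
    simp only
    rw [prod_split fun i => r j i (b i),
      ← Finset.mul_prod_erase Finset.univ _ (Finset.mem_univ j)]
    congr 1
    · exact Finset.prod_congr rfl fun k _ => by simp [hr_def]
    · refine Finset.prod_congr rfl fun j' hj' => Finset.prod_congr rfl fun k _ => ?_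
      have : j' ≠ j := (Finset.mem_erase.1 hj').1
      simp [hr_def, this]
  -- P density equals f
  have hPf : P = volume.withDensity fun b => ENNReal.ofReal (f b) := by
    rw [hP]; congr 1; funext b
    congr 1
    rw [hf_def]; simp only
    congr 1
    exact Finset.sum_congr rfl fun j _ => hgj_eq j b
  -- measurability & positivity of densities
  have hgm : Measurable g :=
    Finset.measurable_prod _ fun i _ => hpm.comp (measurable_pi_apply i)
  have hgjm : ∀ j, Measurable (gj j) :=
    fun j => Finset.measurable_prod _ fun i _ => (hrm j i).comp (measurable_pi_apply i)
  have hfm : Measurable f := (Finset.measurable_sum _ fun j _ => hgjm j).const_mul _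
  have hg0 : ∀ b, 0 ≤ g b := fun b => Finset.prod_nonneg fun i _ => hp0 _
  have hgj0 : ∀ j b, 0 ≤ gj j b := fun j b => Finset.prod_nonneg fun i _ => hr0 j i _
  have hf0 : ∀ b, 0 ≤ f b := fun b =>
    mul_nonneg (by positivity) (Finset.sum_nonneg fun j _ => hgj0 j b)
  have hgInt : Integrable g := Integrable.fintype_prod_dep fun _ => hpInt
  have hgjInt : ∀ j, Integrable (gj j) := fun j => Integrable.fintype_prod_dep (hrInt j)
  have hfInt : Integrable f := (integrable_finset_sum _ fun j _ => hgjInt j).const_mul _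
  have hgval : ∫ b, g b = 1 := by
    rw [hg_def, MeasureTheory.volume_pi, integral_fintype_prod_eq_prod fun _ => p]
    simp [hp1]
  have hgjval : ∀ j, ∫ b, gj j b = 1 := by
    intro j
    rw [hgj_def]
    simp only
    rw [MeasureTheory.volume_pi, integral_fintype_prod_eq_prod (r j)]
    simp [hrint1]
  have hfval : ∫ b, f b = 1 := by
    rw [hf_def]
    simp only
    rw [integral_const_mul, integral_finset_sum _ fun j _ => hgjInt j]
    simp only [hgjval, Finset.sum_const, Finset.card_univ, Fintype.card_fin, nsmul_eq_mul,
      mul_one]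
    field_simp
  -- single-coordinate cross factors
  have hrq : ∀ j (i : (j : Fin d) × Fin (m j)), i.1 = j → r j i = q :=
    fun j i h => by simp [hr_def, h]
  have hrp : ∀ j (i : (j : Fin d) × Fin (m j)), i.1 ≠ j → r j i = p :=
    fun j i h => by simp [hr_def, h]
  have hdivp : ∀ u : ℝ → ℝ, (fun x => u x * p x / p x) =ᵐ[(volume : Measure ℝ)] u := by
    intro u; filter_upwards [hppos] with x hx
    rw [mul_div_assoc, div_self hx.ne', mul_one]
  have hcKey : ∀ j j' (i : (j : Fin d) × Fin (m j)),
      Integrable (fun x => r j i x * r j' i x / p x) ∧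
      ∫ x, r j i x * r j' i x / p x = (if i.1 = j ∧ i.1 = j' then χ else 1) := by
    intro j j' i
    by_cases h : i.1 = j <;> by_cases h' : i.1 = j'
    · rw [hrq j i h, hrq j' i h']
      have he : (fun x => q x * q x / p x) = fun x => q x ^ 2 / p x :=
        funext fun x => by rw [sq]
      rw [he]
      exact ⟨hχint, by rw [if_pos ⟨h, h'⟩, hχ]⟩
    · rw [hrq j i h, hrp j' i h']
      exact ⟨hqInt.congr (hdivp q).symm,
        by rw [integral_congr_ae (hdivp q), hq1, if_neg (by tauto)]⟩
    · rw [hrp j i h, hrq j' i h']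
      have he : (fun x => p x * q x / p x) =ᵐ[(volume : Measure ℝ)] q := by
        filter_upwards [hppos] with x hx
        rw [mul_comm, mul_div_assoc, div_self hx.ne', mul_one]
      exact ⟨hqInt.congr he.symm,
        by rw [integral_congr_ae he, hq1, if_neg (by tauto)]⟩
    · rw [hrp j i h, hrp j' i h']
      exact ⟨hpInt.congr (hdivp p).symm,
        by rw [integral_congr_ae (hdivp p), hp1, if_neg (by tauto)]⟩
  have hprod_c : ∀ j j' b, gj j b * gj j' b / g b
      = ∏ i, (r j i (b i) * r j' i (b i) / p (b i)) := by
    intro j j' b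
    rw [hgj_def, hg_def]
    simp only
    rw [← Finset.prod_mul_distrib, ← Finset.prod_div_distrib]
  have hcrossInt : ∀ j j', Integrable (fun b => gj j b * gj j' b / g b) := by
    intro j j'
    refine (Integrable.fintype_prod_dep
      (f := fun i x => r j i x * r j' i x / p x) fun i => (hcKey j j' i).1).congr ?_
    exact Filter.Eventually.of_forall fun b => (hprod_c j j' b).symm
  have hcrossVal : ∀ j j', ∫ b, gj j b * gj j' b / g b = (if j = j' then χ ^ (m j) else 1) := by
    intro j j'
    simp only [hprod_c]
    rw [MeasureTheory.volume_pi, integral_fintype_prod_eq_prod fun i x => r j i x * r j' i x / p x]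
    rw [Finset.prod_congr rfl fun i _ => (hcKey j j' i).2]
    by_cases hjj : j = j'
    · subst hjj
      rw [if_pos rfl]
      have : ∀ i : ((j : Fin d) × Fin (m j)),
          (if i.1 = j ∧ i.1 = j then χ else 1) = (if i.1 = j then χ else 1) := by
        intro i; by_cases h : i.1 = j <;> simp [h]
      rw [Finset.prod_congr rfl fun i _ => this i, prod_split fun i => if i.1 = j then χ else 1]
      have : ∀ j'' : Fin d, (∏ _k : Fin (m j''), (if j'' = j then χ else 1))
          = (if j'' = j then χ ^ (m j'') else 1) := by
        intro j''
        rw [Finset.prod_const, Finset.card_univ, Fintype.card_fin, apply_ite (· ^ m j''),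
          one_pow]
      rw [Finset.prod_congr rfl fun j'' _ => this j'', Finset.prod_ite_eq' Finset.univ j
        (fun j'' => χ ^ m j''), if_pos (Finset.mem_univ j)]
    · rw [if_neg hjj]
      have : ∀ i : ((j : Fin d) × Fin (m j)), ¬(i.1 = j ∧ i.1 = j') := by
        rintro i ⟨h1, h2⟩; exact hjj (h1 ▸ h2 ▸ rfl)
      simp [this]
  -- chi-square of the mixture
  set S : ℝ := ∑ j, χ ^ (m j) with hS_def
  have hT_eq : ∀ b, f b ^ 2 / g b
      = (1 / d : ℝ) ^ 2 * ∑ j, ∑ j', (gj j b * gj j' b / g b) := by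
    intro b
    rw [hf_def]
    simp only
    rw [mul_pow, sq (∑ j, gj j b), Finset.sum_mul_sum]
    rw [mul_div_assoc, Finset.sum_div]
    congr 1
    exact Finset.sum_congr rfl fun j _ => Finset.sum_div _ _ _
  have hTInt : Integrable (fun b => f b ^ 2 / g b) := by
    have base : Integrable (fun b => ∑ j : Fin d, ∑ j' : Fin d, gj j b * gj j' b / g b) :=
      integrable_finset_sum _ fun j _ => integrable_finset_sum _ fun j' _ => hcrossInt j j'
    exact (base.const_mul ((1 / d : ℝ) ^ 2)).congr
      (Filter.Eventually.of_forall fun b => (hT_eq b).symm)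
  have hTval : ∫ b, f b ^ 2 / g b = (1 / d : ℝ) ^ 2 * (S + ((d : ℝ) ^ 2 - d)) := by
    simp only [hT_eq]
    rw [integral_const_mul, integral_finset_sum _ fun j _ =>
      integrable_finset_sum _ fun j' _ => hcrossInt j j']
    congr 1
    have hrow : ∀ j : Fin d, ∫ b, ∑ j', (gj j b * gj j' b / g b)
        = χ ^ (m j) + ((d : ℝ) - 1) := by
      intro j
      rw [integral_finset_sum _ fun j' _ => hcrossInt j j']
      rw [Finset.sum_congr rfl fun j' _ => hcrossVal j j']
      have : ∀ j' : Fin d, (if j = j' then χ ^ (m j) else (1:ℝ))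
          = (if j' = j then χ ^ (m j) - 1 else 0) + 1 := by
        intro j'; by_cases h : j = j'
        · simp [h]
        · have h2 : j' ≠ j := fun hh => h hh.symm
          simp [h, h2]
      rw [Finset.sum_congr rfl fun j' _ => this j', Finset.sum_add_distrib,
        Finset.sum_ite_eq' Finset.univ j fun _ => χ ^ (m j) - 1,
        if_pos (Finset.mem_univ j)]
      simp only [Finset.sum_const, Finset.card_univ, Fintype.card_fin, nsmul_eq_mul, mul_one]
      ring
    rw [Finset.sum_congr rfl fun j _ => hrow j, Finset.sum_add_distrib]
    simp only [Finset.sum_const, Finset.card_univ, Fintype.card_fin, nsmul_eq_mul, mul_one,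
      hS_def]
    ring
  -- a.e. positivity of g
  have hppos_pi : ∀ᵐ b ∂(volume : Measure (((j : Fin d) × Fin (m j)) → ℝ)),
      ∀ i, 0 < p (b i) := by
    rw [MeasureTheory.ae_all_iff]
    intro i
    have hnull : (volume : Measure ℝ) {x | ¬ 0 < p x} = 0 := ae_iff.1 hppos
    rw [ae_iff]
    have hset : {b : ((j : Fin d) × Fin (m j)) → ℝ | ¬ 0 < p (b i)}
        = Function.eval i ⁻¹' {x | ¬ 0 < p x} := rfl
    rw [hset, MeasureTheory.volume_pi]
    exact Measure.pi_eval_preimage_null _ hnull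
  have hgpos : ∀ᵐ b ∂(volume : Measure (((j : Fin d) × Fin (m j)) → ℝ)), 0 < g b := by
    filter_upwards [hppos_pi] with b hb
    exact Finset.prod_pos fun i _ => hb i
  -- the chi-square distance
  have hD_ae : (fun b => (f b - g b) ^ 2 / g b)
      =ᵐ[(volume : Measure (((j : Fin d) × Fin (m j)) → ℝ))]
      fun b => f b ^ 2 / g b - 2 * f b + g b := by
    filter_upwards [hgpos] with b hb
    field_simp
    ring
  have hDInt : Integrable (fun b => (f b - g b) ^ 2 / g b) :=
    ((hTInt.sub (hfInt.const_mul 2)).add hgInt).congr hD_ae.symm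
  have hDval : ∫ b, (f b - g b) ^ 2 / g b = ((1 / d : ℝ) * S - 1) / d := by
    have hint1 : Integrable (fun b => f b ^ 2 / g b - 2 * f b) := hTInt.sub (hfInt.const_mul 2)
    have hint2 : Integrable (fun b => (2:ℝ) * f b) := hfInt.const_mul 2
    rw [integral_congr_ae hD_ae, integral_add hint1 hgInt,
      integral_sub hTInt hint2, hTval, integral_const_mul, hfval, hgval]
    field_simp
    ring
  have hkey0 : 0 ≤ (1 / d : ℝ) * S - 1 := by
    have h1 : 0 ≤ ∫ b, (f b - g b) ^ 2 / g b :=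
      integral_nonneg fun b => div_nonneg (sq_nonneg _) (hg0 b)
    rw [hDval] at h1
    have h2 : (1 / d : ℝ) * S - 1 = d * (((1 / d : ℝ) * S - 1) / d) := by
      field_simp
    rw [h2]
    exact mul_nonneg hd0.le h1
  -- Cauchy-Schwarz
  set F : (((j : Fin d) × Fin (m j)) → ℝ) → ℝ :=
    fun b => |f b - g b| / Real.sqrt (g b) with hF_def
  set G : (((j : Fin d) × Fin (m j)) → ℝ) → ℝ := fun b => Real.sqrt (g b) with hG_def
  have hF0 : ∀ b, 0 ≤ F b := fun b => div_nonneg (abs_nonneg _) (Real.sqrt_nonneg _)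
  have hG0 : ∀ b, 0 ≤ G b := fun b => Real.sqrt_nonneg _
  have hF2 : ∀ b, F b ^ 2 = (f b - g b) ^ 2 / g b := by
    intro b
    rw [hF_def]
    simp only
    rw [div_pow, sq_abs, Real.sq_sqrt (hg0 b)]
  have hG2 : ∀ b, G b ^ 2 = g b := fun b => Real.sq_sqrt (hg0 b)
  have hFmeas : AEStronglyMeasurable F
      (volume : Measure (((j : Fin d) × Fin (m j)) → ℝ)) :=
    ((hfm.sub hgm).abs.div hgm.sqrt).aestronglyMeasurable
  have hGmeas : AEStronglyMeasurable G
      (volume : Measure (((j : Fin d) × Fin (m j)) → ℝ)) :=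
    hgm.sqrt.aestronglyMeasurable
  have hFmem : MemLp F (ENNReal.ofReal 2)
      (volume : Measure (((j : Fin d) × Fin (m j)) → ℝ)) := by
    rw [show ENNReal.ofReal 2 = 2 by norm_num]
    refine (memLp_two_iff_integrable_sq hFmeas).2 ?_
    have : (fun b => F b ^ 2) = fun b => (f b - g b) ^ 2 / g b := funext hF2
    rw [this]
    exact hDInt
  have hGmem : MemLp G (ENNReal.ofReal 2)
      (volume : Measure (((j : Fin d) × Fin (m j)) → ℝ)) := by
    rw [show ENNReal.ofReal 2 = 2 by norm_num]
    refine (memLp_two_iff_integrable_sq hGmeas).2 ?_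
    have : (fun b => G b ^ 2) = g := funext hG2
    rw [this]
    exact hgInt
  have hpq : (2:ℝ).HolderConjugate 2 := ⟨by norm_num, by norm_num, by norm_num⟩
  have hCS := integral_mul_le_Lp_mul_Lq_of_nonneg hpq
    (Filter.Eventually.of_forall hF0) (Filter.Eventually.of_forall hG0) hFmem hGmem
  have hL1 : ∫ b, |f b - g b| ≤ Real.sqrt (((1 / d : ℝ) * S - 1) / d) := by
    have h1 : ∫ b, F b * G b = ∫ b, |f b - g b| := by
      refine integral_congr_ae ?_
      filter_upwards [hgpos] with b hb
      rw [hF_def, hG_def]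
      simp only
      rw [div_mul_cancel₀ _ (Real.sqrt_pos.2 hb).ne']
    have h2 : ∫ b, F b ^ (2:ℝ) = ((1 / d : ℝ) * S - 1) / d := by
      simp only [Real.rpow_two, hF2]
      exact hDval
    have h3 : ∫ b, G b ^ (2:ℝ) = 1 := by
      simp only [Real.rpow_two, hG2]
      exact hgval
    calc ∫ b, |f b - g b| = ∫ b, F b * G b := h1.symm
      _ ≤ (∫ b, F b ^ (2:ℝ)) ^ (1/(2:ℝ)) * (∫ b, G b ^ (2:ℝ)) ^ (1/(2:ℝ)) := hCS
      _ = Real.sqrt (((1 / d : ℝ) * S - 1) / d) := by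
          rw [h2, h3, Real.one_rpow, mul_one, ← Real.sqrt_eq_rpow]
  have hsd : 0 < Real.sqrt d := Real.sqrt_pos.2 hd0
  have hBsplit : Real.sqrt (((1 / d : ℝ) * S - 1) / d)
      = Real.sqrt ((1 / d : ℝ) * S - 1) / Real.sqrt d := Real.sqrt_div hkey0 _
  -- per-set bound
  have hset : ∀ s : Set (((j : Fin d) × Fin (m j)) → ℝ), MeasurableSet s →
      |(P s).toReal - (Q s).toReal|
        ≤ (1 / (2 * Real.sqrt d)) * Real.sqrt ((1 / d : ℝ) * S - 1) := by
    intro s hs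
    have hPs : (P s).toReal = ∫ b in s, f b := by
      rw [hPf, withDensity_apply _ hs,
        integral_eq_lintegral_of_nonneg_ae (Filter.Eventually.of_forall hf0)
          hfm.aestronglyMeasurable.restrict]
    have hQs : (Q s).toReal = ∫ b in s, g b := by
      rw [hQ, withDensity_apply _ hs,
        integral_eq_lintegral_of_nonneg_ae (Filter.Eventually.of_forall hg0)
          hgm.aestronglyMeasurable.restrict]
    rw [hPs, hQs]
    have hhalf := half_L1_bound volume hfInt hgInt (by rw [hfval, hgval]) hs
    have : (1/2 : ℝ) * ∫ b, |f b - g b|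
        ≤ (1 / (2 * Real.sqrt d)) * Real.sqrt ((1 / d : ℝ) * S - 1) := by
      have := hL1
      rw [hBsplit] at this
      have h4 : (1 / (2 * Real.sqrt d)) * Real.sqrt ((1 / d : ℝ) * S - 1)
          = (1/2 : ℝ) * (Real.sqrt ((1 / d : ℝ) * S - 1) / Real.sqrt d) := by
        field_simp
      rw [h4]
      linarith
    linarith
  refine ⟨?_, ?_⟩
  · have : Nonempty {s : Set (((j : Fin d) × Fin (m j)) → ℝ) // MeasurableSet s} :=
      ⟨⟨∅, MeasurableSet.empty⟩⟩
    exact ciSup_le fun s => hset s.1 s.2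
  · intro Ψ hΨ
    have hs : MeasurableSet {b : ((j : Fin d) × Fin (m j)) → ℝ | Ψ b = true} :=
      hΨ (measurableSet_singleton true)
    have hcompl : {b : ((j : Fin d) × Fin (m j)) → ℝ | Ψ b = false}
        = {b : ((j : Fin d) × Fin (m j)) → ℝ | Ψ b = true}ᶜ := by
      ext b; simp
    have hQuniv : Q Set.univ = 1 := by
      rw [hQ, withDensity_apply _ MeasurableSet.univ, Measure.restrict_univ,
        ← ofReal_integral_eq_lintegral_ofReal hgInt (Filter.Eventually.of_forall hg0)]
      rw [show (∫ b, g b) = 1 from hgval]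
      exact ENNReal.ofReal_one
    have hQne : ∀ s : Set (((j : Fin d) × Fin (m j)) → ℝ), Q s ≠ ⊤ := by
      intro s
      exact ((measure_mono (Set.subset_univ s)).trans_lt
        (hQuniv ▸ ENNReal.one_lt_top)).ne
    have hsum : (Q {b | Ψ b = true}).toReal + (Q {b | Ψ b = false}).toReal = 1 := by
      rw [hcompl, ← ENNReal.toReal_add (hQne _) (hQne _),
        measure_add_measure_compl hs, hQuniv, ENNReal.toReal_one]
    have habs := abs_le.1 (hset _ hs)
    have h5 := habs.1
    linarith
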